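/- For each fixed x ∈ (0,1), the integral over y ∈ [0,1] of 1/(x+y-2xy)² equals 1/(x(1-x)). That is, the projection of the density 1/(x+y-2xy)² on the first coordinate is the density 1/(x(1-x)) of the Romik-invariant measure. -/

import Mathlib

theorem romik_density_projection (x : ℝ) (hx : x ∈ Set.Ioo (0 : ℝ) 1) :
    ∫ y in (0 : ℝ)..1, 1 / (x + y - 2*x*y)^2 = 1 / (x * (1 - x)) := by
  obtain ⟨hx0, hx1⟩ := hx
  have key : ∀ y ∈ Set.uIcc (0:ℝ) 1, 0 < x + y - 2*x*y := by
    intro y hy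
    rw [Set.uIcc_of_le (by norm_num)] at hy
    obtain ⟨hy0, hy1⟩ := hy
    rcases le_or_gt (2*x) 1 with h | h
    · nlinarith
    · nlinarith
  have hd : ∀ y ∈ Set.uIcc (0:ℝ) 1,
      HasDerivAt (fun y => y / (x * (x + (1 - 2*x)*y))) (1 / (x + y - 2*x*y)^2) y := by
    intro y hy
    have hpos := key y hy
    have hne : x * (x + (1 - 2*x)*y) ≠ 0 := by
      apply mul_ne_zero hx0.ne'
      intro h; nlinarith
    have h1 : HasDerivAt (fun y : ℝ => x * (x + (1 - 2*x)*y)) (x * (1 - 2*x)) y := by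
      have : HasDerivAt (fun y : ℝ => x + (1 - 2*x)*y) (1 - 2*x) y := by
        simpa using ((hasDerivAt_id y).const_mul (1 - 2*x)).const_add x
      simpa using this.const_mul x
    have := (hasDerivAt_id y).div h1 hne
    convert this using 1
    case e'_4 => rfl
    case e'_5 => rfl
    case e'_8 => rfl
    rw [div_eq_div_iff (pow_ne_zero 2 hpos.ne') (pow_ne_zero 2 hne), id]
    ring
  have hcont : ContinuousOn (fun y => 1 / (x + y - 2*x*y)^2) (Set.uIcc (0:ℝ) 1) := by
    apply ContinuousOn.div continuousOn_const
    · exact ((continuous_const.add continuous_id).sub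
        ((continuous_const.mul continuous_id))).continuousOn.pow 2
    · intro y hy
      exact pow_ne_zero 2 (key y hy).ne'
  have := intervalIntegral.integral_eq_sub_of_hasDerivAt hd
      (hcont.intervalIntegrable)
  rw [this]
  have h2 : x + (1 - 2*x)*1 = 1 - x := by ring
  rw [h2, zero_div, sub_zero]
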